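/- Let K > 1 be an integer and for k ∈ {1,...,K} define α_k(x) := x^{k−1} · ∑_{ℓ=k}^{K} C(ℓ−1, k−1)·(1−x)^{ℓ−k}, where C denotes the binomial coefficient. Then for every k with 1 ≤ k < K and every x ∈ (0,1), α_k(x) > α_{k+1}(x). -/

import Mathlib

lemma alpha_key (j : ℕ) (x : ℝ) : ∀ n : ℕ,
    (∑ m ∈ Finset.range (n+1), ((m+j).choose j : ℝ) * (1-x)^m)
      - x * ∑ m ∈ Finset.range n, ((m+j+1).choose (j+1) : ℝ) * (1-x)^m
    = ((n+j+1).choose (j+1) : ℝ) * (1-x)^n := by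
  intro n
  induction n with
  | zero => simp
  | succ n ih =>
    rw [Finset.sum_range_succ (fun m => ((m+j+1).choose (j+1) : ℝ) * (1-x)^m) n,
        Finset.sum_range_succ (fun m => ((m+j).choose j : ℝ) * (1-x)^m) (n+1)]
    have h : (n+1+j+1).choose (j+1) = (n+j+1).choose j + (n+j+1).choose (j+1) := by
      have := Nat.choose_succ_succ (n+j+1) j
      convert this using 2 <;> omega
    have h' : ((n+1+j+1).choose (j+1) : ℝ)
        = ((n+j+1).choose j : ℝ) + ((n+j+1).choose (j+1) : ℝ) := by
      exact_mod_cast congrArg (Nat.cast : ℕ → ℝ) h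
    have e : n+1+j = n+j+1 := by omega
    rw [h', e]
    linear_combination ih

/-- For `K > 1` and `α_k(x) = x^(k-1) ∑_{ℓ=k}^K C(ℓ-1,k-1) (1-x)^(ℓ-k)`,
we have `α_k(x) > α_(k+1)(x)` for every `1 ≤ k < K` and `x ∈ (0,1)`. -/
theorem alpha_strict_anti
    (K : ℕ) (hK : 1 < K) (α : ℕ → ℝ → ℝ)
    (hα : ∀ k ∈ Finset.Icc 1 K, ∀ x : ℝ,
      α k x = x ^ (k - 1) *
        ∑ ℓ ∈ Finset.Icc k K, ((ℓ - 1).choose (k - 1) : ℝ) * (1 - x) ^ (ℓ - k)) :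
    ∀ k : ℕ, 1 ≤ k → k < K → ∀ x ∈ Set.Ioo (0 : ℝ) 1,
      α (k + 1) x < α k x := by
  intro k hk1 hkK x hx
  obtain ⟨hx0, hx1⟩ := hx
  obtain ⟨j, rfl⟩ : ∃ j, k = j + 1 := ⟨k - 1, by omega⟩
  have hmem1 : j + 1 ∈ Finset.Icc 1 K := Finset.mem_Icc.mpr ⟨by omega, by omega⟩
  have hmem2 : j + 2 ∈ Finset.Icc 1 K := Finset.mem_Icc.mpr ⟨by omega, by omega⟩
  rw [hα _ hmem1 x, hα _ hmem2 x]
  -- rewrite the Icc sums as range sums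
  have hA : ∑ ℓ ∈ Finset.Icc (j+1) K, ((ℓ - 1).choose (j + 1 - 1) : ℝ) * (1 - x) ^ (ℓ - (j+1))
      = ∑ m ∈ Finset.range (K - j), ((m + j).choose j : ℝ) * (1-x)^m := by
    rw [← Finset.Ico_add_one_right_eq_Icc, Finset.sum_Ico_eq_sum_range]
    apply Finset.sum_congr (by congr 1; omega)
    intro m _
    rw [show j+1+m-1 = m+j from by omega, show j+1-1 = j from rfl,
        show j+1+m-(j+1) = m from by omega]
  have hB : ∑ ℓ ∈ Finset.Icc (j+2) K, ((ℓ - 1).choose (j + 2 - 1) : ℝ) * (1 - x) ^ (ℓ - (j+2))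
      = ∑ m ∈ Finset.range (K - j - 1), ((m + j + 1).choose (j+1) : ℝ) * (1-x)^m := by
    rw [← Finset.Ico_add_one_right_eq_Icc, Finset.sum_Ico_eq_sum_range]
    apply Finset.sum_congr (by congr 1; omega)
    intro m _
    rw [show j+2+m-1 = m+j+1 from by omega, show j+2-1 = j+1 from rfl,
        show j+2+m-(j+2) = m from by omega]
  have hrw1 : j + 1 + 1 = j + 2 := rfl
  rw [hrw1, hA, hB]
  have hn : K - j = (K - j - 1) + 1 := by omega
  set n := K - j - 1 with hn'
  rw [hn]
  have key := alpha_key j x n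
  have hpos : (0:ℝ) < ((n+j+1).choose (j+1) : ℝ) * (1-x)^n := by
    apply mul_pos
    · exact_mod_cast Nat.choose_pos (by omega)
    · have h1x : (0:ℝ) < 1 - x := by linarith
      positivity
  have hxpow : (0:ℝ) < x ^ j := pow_pos hx0 j
  have h1 : j + 1 - 1 = j := rfl
  have h2 : j + 2 - 1 = j + 1 := rfl
  rw [h1, h2]
  have hdiff : x^j * (∑ m ∈ Finset.range (n+1), ((m+j).choose j : ℝ) * (1-x)^m)
      - x^(j+1) * (∑ m ∈ Finset.range n, ((m+j+1).choose (j+1) : ℝ) * (1-x)^m)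
      = x^j * (((n+j+1).choose (j+1) : ℝ) * (1-x)^n) := by
    rw [pow_succ]
    linear_combination x^j * key
  nlinarith [mul_pos hxpow hpos]
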